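/- arXiv:1811.07959 — 2 statements merged into one kernel-verified Lean document; each statement's English description precedes it below -/
import Mathlib

section
/- A finite poset P = (X, ≤) is N-free if and only if for every subset A of X with at least two elements, the induced subposet on A is a disjoint sum or a linear sum; that is, there exists a nonempty proper subset B of A such that either no element of B is comparable to any element of A \ B, or every element of B is strictly below every element of A \ B. (Equivalently, P is N-free if and only if P belongs to the class of series-parallel posets, the smallest class containing the one-element poset and closed under linear sums and disjoint sums.) -/
/-- `(a,b,c,d)` is an `N` in the poset: the four elements are distinct, `a < b`, `c < b`,
`c < d`, and these are the only comparabilities among them. -/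
def IsN {X : Type*} [PartialOrder X] (a b c d : X) : Prop :=
  a ≠ b ∧ a ≠ c ∧ a ≠ d ∧ b ≠ c ∧ b ≠ d ∧ c ≠ d ∧
  a < b ∧ c < b ∧ c < d ∧
  (¬ a ≤ c ∧ ¬ c ≤ a) ∧ (¬ a ≤ d ∧ ¬ d ≤ a) ∧ (¬ b ≤ d ∧ ¬ d ≤ b)

/-- A poset is `N`-free if it contains no `N`. -/
def NFree (X : Type*) [PartialOrder X] : Prop :=
  ∀ a b c d : X, ¬ IsN a b c d

/-- `inc(x)`: the set of elements incomparable to `x`. -/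
def incP {X : Type*} [PartialOrder X] (x : X) : Set X :=
  {y | ¬ x ≤ y ∧ ¬ y ≤ x}

/-- The comparability graph of a poset. -/
def compGraph (X : Type*) [PartialOrder X] : SimpleGraph X where
  Adj u v := u < v ∨ v < u
  symm := by constructor; intro u v h; exact h.symm
  loopless := by constructor; intro u h; rcases h with h | h <;> exact lt_irrefl u h

/-- `A` is a module of the poset: every element outside `A` relates in the same way
to all elements of `A`. -/
def PModule {X : Type*} [PartialOrder X] (A : Set X) : Prop :=
  ∀ v ∉ A, ∀ a ∈ A, ∀ a' ∈ A, (v < a → v < a') ∧ (a < v → a' < v)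

/-- `C⁺_x`: elements above `x` comparable to all elements of `inc(x)`. -/
def Cplus {X : Type*} [PartialOrder X] (x : X) : Set X :=
  {y | x < y ∧ ∀ z ∈ incP x, (y ≤ z ∨ z ≤ y)}

/-- `C⁻_x`: elements below `x` comparable to all elements of `inc(x)`. -/
def Cminus {X : Type*} [PartialOrder X] (x : X) : Set X :=
  {y | y < x ∧ ∀ z ∈ incP x, (y ≤ z ∨ z ≤ y)}

/-- A poset is chain complete if every nonempty chain has a supremum and an infimum. -/
def ChainComplete (X : Type*) [PartialOrder X] : Prop :=
  ∀ C : Set X, C.Nonempty → IsChain (· ≤ ·) C → (∃ s, IsLUB C s) ∧ (∃ i, IsGLB C i)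

namespace NFA

variable {X : Type*}

/-- edge of the graph `s` induced on `A` -/
def Edge (s : X → X → Prop) (A : Set X) (u w : X) : Prop :=
  u ∈ A ∧ w ∈ A ∧ u ≠ w ∧ s u w

/-- reachability in the graph `s` induced on `A` -/
def Reach (s : X → X → Prop) (A : Set X) : X → X → Prop :=
  Relation.ReflTransGen (Edge s A)

def P4Free (s : X → X → Prop) : Prop :=
  ∀ a b c d : X, a ≠ b → a ≠ c → a ≠ d → b ≠ c → b ≠ d → c ≠ d →
    s a b → s b c → s c d → ¬ s a c → ¬ s a d → ¬ s b d → False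

def Disc (s : X → X → Prop) (A : Set X) : Prop :=
  ∃ x ∈ A, ∃ y ∈ A, ¬ Reach s A x y

lemma reach_symm {s : X → X → Prop} {A : Set X} (hs : ∀ u w : X, s u w → s w u)
    {x y : X} (h : Reach s A x y) : Reach s A y x := by
  induction h with
  | refl => exact Relation.ReflTransGen.refl
  | tail _ he ih =>
      exact Relation.ReflTransGen.head ⟨he.2.1, he.1, (Ne.symm he.2.2.1), hs _ _ he.2.2.2⟩ ih

lemma reach_trans {s : X → X → Prop} {A : Set X} {x y z : X}
    (h : Reach s A x y) (h' : Reach s A y z) : Reach s A x z :=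
  Relation.ReflTransGen.trans h h'

lemma reach_single {s : X → X → Prop} {A : Set X} {x y : X} (h : Edge s A x y) :
    Reach s A x y := Relation.ReflTransGen.single h

lemma reach_congr {s t : X → X → Prop} {A : Set X}
    (h : ∀ u w, u ∈ A → w ∈ A → u ≠ w → (s u w ↔ t u w)) {x y : X} :
    Reach s A x y ↔ Reach t A x y := by
  constructor <;> intro hr <;> refine Relation.ReflTransGen.mono ?_ _ _ hr
  · rintro u w ⟨h1, h2, h3, h4⟩; exact ⟨h1, h2, h3, (h u w h1 h2 h3).1 h4⟩
  · rintro u w ⟨h1, h2, h3, h4⟩; exact ⟨h1, h2, h3, (h u w h1 h2 h3).2 h4⟩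

lemma reach_mono {s : X → X → Prop} {A B : Set X} (hAB : A ⊆ B) {x y : X}
    (h : Reach s A x y) : Reach s B x y := by
  refine Relation.ReflTransGen.mono ?_ _ _ h
  rintro u w ⟨h1, h2, h3, h4⟩; exact ⟨hAB h1, hAB h2, h3, h4⟩

lemma p4free_compl {s : X → X → Prop} (hs : ∀ u w : X, s u w → s w u)
    (hp : P4Free s) : P4Free (fun u w => ¬ s u w) := by
  intro a b c d hab hac had hbc hbd hcd e1 e2 e3 n1 n2 n3
  push_neg at n1 n2 n3
  exact hp c a d b (Ne.symm hac) hcd (Ne.symm hbc) had hab (Ne.symm hbd)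
    (hs _ _ n1) n2 (hs _ _ n3)
    e3 (fun h => e2 (hs _ _ h)) e1

end NFA

namespace NFA

variable {X : Type*}

lemma reach_mem {s : X → X → Prop} {A : Set X} {x y : X}
    (h : Reach s A x y) (hx : x ∈ A) : y ∈ A := by
  induction h with
  | refl => exact hx
  | tail _ he _ => exact he.2.1

lemma remove_vertex {s : X → X → Prop} {A : Set X} {v x : X} (hx : x ≠ v) :
    ∀ {y}, Reach s A x y →
      (y = v ∧ ∃ p, Reach s (A \ {v}) x p ∧ s p v) ∨
      (y ≠ v ∧ (Reach s (A \ {v}) x y ∨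
        ((∃ p, Reach s (A \ {v}) x p ∧ s p v) ∧
          ∃ q, s v q ∧ Reach s (A \ {v}) q y))) := by
  intro y h
  induction h with
  | refl => exact Or.inr ⟨hx, Or.inl Relation.ReflTransGen.refl⟩
  | @tail z w hz he ih =>
    obtain ⟨hzA, hwA, hzw, hszw⟩ := he
    by_cases hwv : w = v
    · subst hwv
      refine Or.inl ⟨rfl, ?_⟩
      rcases ih with ⟨hzv, _⟩ | ⟨hzv, hc⟩
      · exact absurd hzv hzw
      · rcases hc with hr | ⟨hhit, _⟩
        · exact ⟨z, hr, hszw⟩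
        · exact hhit
    · rcases ih with ⟨hzv, hhit⟩ | ⟨hzv, hc⟩
      · subst hzv
        exact Or.inr ⟨hwv, Or.inr ⟨hhit, w, hszw, Relation.ReflTransGen.refl⟩⟩
      · have hzA' : z ∈ A \ {v} := ⟨hzA, hzv⟩
        have hwA' : w ∈ A \ {v} := ⟨hwA, hwv⟩
        rcases hc with hr | ⟨hhit, q, hvq, hqz⟩
        · exact Or.inr ⟨hwv, Or.inl (hr.tail ⟨hzA', hwA', hzw, hszw⟩)⟩
        · exact Or.inr ⟨hwv, Or.inr ⟨hhit, q, hvq, hqz.tail ⟨hzA', hwA', hzw, hszw⟩⟩⟩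

lemma flip_lemma {s : X → X → Prop} {A' : Set X} {v u w : X}
    (h : Reach s A' u w) :
    s v u → ¬ s v w →
      ∃ α β, α ∈ A' ∧ β ∈ A' ∧ α ≠ β ∧ s α β ∧ s v α ∧ ¬ s v β ∧ Reach s A' β w := by
  induction h using Relation.ReflTransGen.head_induction_on with
  | refl => intro h1 h2; exact absurd h1 h2
  | @head a c he hr ih =>
    intro hva hnvw
    by_cases hvc : s v c
    · exact ih hvc hnvw
    · exact ⟨a, c, he.1, he.2.1, he.2.2.1, he.2.2.2, hva, hvc, hr⟩

end NFA

namespace NFA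

variable {X : Type*}

lemma step_lemma {s : X → X → Prop} {A : Set X} {v x y : X}
    (hs : ∀ u w : X, s u w → s w u) (hp : P4Free s)
    (hvA : v ∈ A) (hx : x ∈ A \ {v}) (hy : y ∈ A \ {v})
    (hnxy : ¬ Reach s (A \ {v}) x y) :
    Disc s A ∨ Disc (fun u w => ¬ s u w) A := by
  by_cases hconn : Disc s A
  · exact Or.inl hconn
  right
  unfold Disc at hconn
  push_neg at hconn
  have hxv : x ≠ v := fun h => hx.2 h
  have hyv : y ≠ v := fun h => hy.2 h
  -- from connectivity of A and disconnection of A' get two neighbours of v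
  have h1 := remove_vertex hxv (hconn x hx.1 y hy.1)
  rcases h1 with ⟨h1, _⟩ | ⟨_, h1⟩
  · exact absurd h1 hyv
  rcases h1 with h1 | ⟨⟨p0, hxp0, hp0v⟩, q0, hvq0, hq0y⟩
  · exact absurd h1 hnxy
  have hp0A : p0 ∈ A \ {v} := reach_mem hxp0 hx
  have hq0A : q0 ∈ A \ {v} := reach_mem (reach_symm hs hq0y) hy
  have hp0q0 : ¬ Reach s (A \ {v}) p0 q0 := fun h =>
    hnxy (reach_trans hxp0 (reach_trans h hq0y))
  -- v is adjacent to every vertex of A'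
  have hall : ∀ w ∈ A \ {v}, s v w := by
    intro w hw
    by_contra hnvw
    have hwv : w ≠ v := fun h => hw.2 h
    rcases Relation.ReflTransGen.cases_head (hconn v hvA w hw.1) with heq | ⟨u, hu, hur⟩
    · exact hwv heq.symm
    have huv : u ≠ v := Ne.symm hu.2.2.1
    have hvu : s v u := hu.2.2.2
    have hexu : ∃ u'', s v u'' ∧ Reach s (A \ {v}) u'' w := by
      rcases remove_vertex huv hur with ⟨h2, _⟩ | ⟨_, h2⟩
      · exact absurd h2 hwv
      rcases h2 with h2 | ⟨_, q', hvq', hq'w⟩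
      · exact ⟨u, hvu, h2⟩
      · exact ⟨q', hvq', hq'w⟩
    obtain ⟨u'', hvu'', hu''w⟩ := hexu
    obtain ⟨α, β, hα, hβ, hαβne, hαβ, hvα, hnvβ, hβw⟩ := flip_lemma hu''w hvu'' hnvw
    -- pick c among p0, q0 not reachable from w
    have hc : ∃ c, c ∈ A \ {v} ∧ s v c ∧ ¬ Reach s (A \ {v}) w c := by
      by_cases h : Reach s (A \ {v}) w p0
      · refine ⟨q0, hq0A, hvq0, fun h' => hp0q0 ?_⟩
        exact reach_trans (reach_symm hs h) h'
      · exact ⟨p0, hp0A, hs _ _ hp0v, h⟩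
    obtain ⟨c, hcA, hvc, hnwc⟩ := hc
    have hαw : Reach s (A \ {v}) α w :=
      Relation.ReflTransGen.head ⟨hα, hβ, hαβne, hαβ⟩ hβw
    have hcα : c ≠ α := by rintro rfl; exact hnwc (reach_symm hs hαw)
    have hcβ : c ≠ β := by rintro rfl; exact hnwc (reach_symm hs hβw)
    have hncα : ¬ s c α := fun h =>
      hnwc (reach_symm hs (reach_trans (reach_single ⟨hcA, hα, hcα, h⟩) hαw))
    have hncβ : ¬ s c β := fun h =>
      hnwc (reach_symm hs (reach_trans (reach_single ⟨hcA, hβ, hcβ, h⟩) hβw))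
    exact hp c v α β (fun h => hcA.2 h) hcα hcβ (fun h => hα.2 h.symm)
      (fun h => hβ.2 h.symm) hαβne (hs _ _ hvc) hvα hαβ hncα hncβ hnvβ
  -- v is isolated in the complement graph on A
  refine ⟨v, hvA, x, hx.1, fun h => ?_⟩
  rcases Relation.ReflTransGen.cases_head h with heq | ⟨u, hu, _⟩
  · exact hxv heq.symm
  · exact hu.2.2.2 (hall u ⟨hu.2.1, fun hh => hu.2.2.1 hh.symm⟩)

end NFA

namespace NFA

variable {X : Type*}

lemma disc_compl_compl {s : X → X → Prop} {A : Set X}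
    (h : Disc (fun u w => ¬ ¬ s u w) A) : Disc s A := by
  obtain ⟨x, hx, y, hy, hr⟩ := h
  refine ⟨x, hx, y, hy, fun h' => hr ?_⟩
  exact (reach_congr (s := fun u w => ¬ ¬ s u w) (t := s) (fun u w _ _ _ => not_not)).mpr h'

lemma main_graph [Fintype X] {s : X → X → Prop}
    (hs : ∀ u w : X, s u w → s w u) (hp : P4Free s) :
    ∀ A : Set X, A.Nontrivial → Disc s A ∨ Disc (fun u w => ¬ s u w) A := by
  have key : ∀ n : ℕ, ∀ A : Set X, A.ncard = n → A.Nontrivial →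
      Disc s A ∨ Disc (fun u w => ¬ s u w) A := by
    intro n
    induction n using Nat.strong_induction_on with
    | _ n ih =>
      intro A hn hA
      obtain ⟨x, hxA, y, hyA, hxy⟩ := hA
      by_cases hA' : (A \ {y}).Nontrivial
      · have hlt : (A \ {y}).ncard < n := by
          rw [← hn]
          exact Set.ncard_diff_singleton_lt_of_mem hyA (Set.toFinite A)
        rcases ih _ hlt _ rfl hA' with hD | hD
        · obtain ⟨x0, hx0, y0, hy0, hnr⟩ := hD
          exact step_lemma hs hp hyA hx0 hy0 hnr
        · obtain ⟨x0, hx0, y0, hy0, hnr⟩ := hD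
          have := step_lemma (s := fun u w => ¬ s u w)
            (fun u w h hh => h (hs _ _ hh)) (p4free_compl hs hp) hyA hx0 hy0 hnr
          rcases this with h | h
          · exact Or.inr h
          · exact Or.inl (disc_compl_compl h)
      · -- A = {x, y}
        have hxA' : x ∈ A \ {y} := ⟨hxA, fun h => hxy h⟩
        have honly : ∀ z ∈ A, z ≠ y → z = x := by
          intro z hz hzy
          rw [Set.not_nontrivial_iff] at hA'
          exact hA' ⟨hz, hzy⟩ hxA'
        by_cases hsxy : s x y
        · refine Or.inr ⟨x, hxA, y, hyA, fun h => ?_⟩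
          rcases Relation.ReflTransGen.cases_head h with heq | ⟨u, hu, _⟩
          · exact hxy heq
          · by_cases huy : u = y
            · exact hu.2.2.2 (huy ▸ hsxy)
            · exact (Ne.symm hu.2.2.1) (honly u hu.2.1 huy)
        · refine Or.inl ⟨x, hxA, y, hyA, fun h => ?_⟩
          rcases Relation.ReflTransGen.cases_head h with heq | ⟨u, hu, _⟩
          · exact hxy heq
          · by_cases huy : u = y
            · exact hsxy (huy ▸ hu.2.2.2)
            · exact (Ne.symm hu.2.2.1) (honly u hu.2.1 huy)
  exact fun A hA => key A.ncard A rfl hA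

end NFA

namespace NFA

variable {X : Type*} [PartialOrder X]

lemma inc_of_not_s {u w : X} (hne : u ≠ w) (h : ¬ (u < w ∨ w < u)) :
    ¬ u ≤ w ∧ ¬ w ≤ u :=
  ⟨fun hle => h (Or.inl (lt_of_le_of_ne hle hne)),
   fun hle => h (Or.inr (lt_of_le_of_ne hle (Ne.symm hne)))⟩

lemma p4free_of_nfree (h : NFree X) :
    P4Free (fun u w : X => u < w ∨ w < u) := by
  intro a b c d hab hac had hbc hbd hcd e1 e2 e3 n1 n2 n3
  have iac := inc_of_not_s hac n1
  have iad := inc_of_not_s had n2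
  have ibd := inc_of_not_s hbd n3
  rcases e1 with h1 | h1
  · -- a < b
    have h2 : c < b := by
      rcases e2 with h2 | h2
      · exact absurd (Or.inl (lt_trans h1 h2)) n1
      · exact h2
    have h3 : c < d := by
      rcases e3 with h3 | h3
      · exact h3
      · exact absurd (Or.inr (lt_trans h3 h2)) n3
    exact h a b c d ⟨hab, hac, had, hbc, hbd, hcd, h1, h2, h3, iac, iad, ibd⟩
  · -- b < a
    have h2 : b < c := by
      rcases e2 with h2 | h2
      · exact h2
      · exact absurd (Or.inr (lt_trans h2 h1)) n1
    have h3 : d < c := by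
      rcases e3 with h3 | h3
      · exact absurd (Or.inl (lt_trans h2 h3)) n3
      · exact h3
    exact h d c b a ⟨Ne.symm hcd, Ne.symm hbd, Ne.symm had, Ne.symm hbc, Ne.symm hac,
      Ne.symm hab, h3, h2, h1,
      ⟨ibd.2, ibd.1⟩, ⟨iad.2, iad.1⟩, ⟨iac.2, iac.1⟩⟩

end NFA

theorem finite_nfree_iff_series_parallel
    {X : Type*} [Fintype X] [PartialOrder X] :
    NFree X ↔ ∀ A : Set X, A.Nontrivial →
      ∃ B : Set X, B ⊆ A ∧ B.Nonempty ∧ B ≠ A ∧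
        ((∀ b ∈ B, ∀ a ∈ A \ B, ¬ b ≤ a ∧ ¬ a ≤ b) ∨
         (∀ b ∈ B, ∀ a ∈ A \ B, b < a)) := by
  constructor
  · intro hNF A hA
    set s : X → X → Prop := fun u w => u < w ∨ w < u with hsdef
    have hs : ∀ u w : X, s u w → s w u := fun u w h => h.symm
    have hts : ∀ u w : X, ¬ s u w → ¬ s w u := fun u w h hh => h (hs _ _ hh)
    rcases NFA.main_graph hs (NFA.p4free_of_nfree hNF) A hA with
      ⟨x, hx, y, hy, hnr⟩ | ⟨x, hx, y, hy, hnr⟩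
    · -- comparability graph on A disconnected : disjoint sum
      refine ⟨{z | z ∈ A ∧ NFA.Reach s A x z}, fun z hz => hz.1,
        ⟨x, hx, Relation.ReflTransGen.refl⟩, ?_, Or.inl ?_⟩
      · intro heq
        have : y ∈ {z | z ∈ A ∧ NFA.Reach s A x z} := by rw [heq]; exact hy
        exact hnr this.2
      · rintro b ⟨hbA, hbr⟩ a ⟨haA, haB⟩
        have hba : b ≠ a := fun h => haB (h ▸ ⟨hbA, hbr⟩)
        constructor
        · intro hle
          exact haB ⟨haA, hbr.tail ⟨hbA, haA, hba, Or.inl (lt_of_le_of_ne hle hba)⟩⟩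
        · intro hle
          exact haB ⟨haA, hbr.tail ⟨hbA, haA, hba, Or.inr (lt_of_le_of_ne hle (Ne.symm hba))⟩⟩
    · -- incomparability graph on A disconnected : linear sum
      set t : X → X → Prop := fun u w => ¬ s u w with htdef
      have hnryx : ¬ NFA.Reach t A y x := fun h => hnr (NFA.reach_symm hts h)
      -- comparability with the component of y
      have hcomp : ∀ z ∈ A, ¬ NFA.Reach t A y z → ∀ k ∈ A, NFA.Reach t A y k →
          (z < k ∨ k < z) := by
        intro z hz hnz k hk hrk
        have hkz : k ≠ z := fun h => hnz (h ▸ hrk)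
        by_cases hskz : s k z
        · rcases hskz with h | h
          · exact Or.inr h
          · exact Or.inl h
        · exact absurd (hrk.tail ⟨hk, hz, hkz, hskz⟩) hnz
      -- uniformity over the component of y
      have hunif : ∀ z ∈ A, ¬ NFA.Reach t A y z → ∀ k, NFA.Reach t A y k →
          ((z < y → z < k) ∧ (y < z → k < z)) := by
        intro z hz hnz k hrk
        induction hrk with
        | refl => exact ⟨id, id⟩
        | @tail m k hrm he ih =>
          obtain ⟨hmA, hkA, hmk, hsmk⟩ := he
          have hrk' : NFA.Reach t A y k := hrm.tail ⟨hmA, hkA, hmk, hsmk⟩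
          constructor
          · intro hzy
            have hzm := ih.1 hzy
            rcases hcomp z hz hnz k hkA hrk' with h | h
            · exact h
            · exact absurd (Or.inr (lt_trans h hzm)) hsmk
          · intro hyz
            have hmz := ih.2 hyz
            rcases hcomp z hz hnz k hkA hrk' with h | h
            · exact absurd (Or.inl (lt_trans hmz h)) hsmk
            · exact h
      by_cases hHi : ({z | z ∈ A ∧ ¬ NFA.Reach t A y z ∧ y < z} : Set X).Nonempty
      · refine ⟨A \ {z | z ∈ A ∧ ¬ NFA.Reach t A y z ∧ y < z}, Set.diff_subset,
          ⟨y, hy, fun hYHi => hYHi.2.1 Relation.ReflTransGen.refl⟩, ?_, Or.inr ?_⟩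
        · intro heq
          obtain ⟨h0, hh0⟩ := hHi
          have : h0 ∈ A \ {z | z ∈ A ∧ ¬ NFA.Reach t A y z ∧ y < z} := by
            rw [heq]; exact hh0.1
          exact this.2 hh0
        · rintro b ⟨hbA, hbHi⟩ a ⟨haA, haB⟩
          have haHi : a ∈ {z | z ∈ A ∧ ¬ NFA.Reach t A y z ∧ y < z} := by
            by_contra h
            exact haB ⟨haA, h⟩
          obtain ⟨_, hna, hya⟩ := haHi
          by_cases hbK : NFA.Reach t A y b
          · exact (hunif a haA hna b hbK).2 hya
          · have hby : b < y := by
              rcases hcomp b hbA hbK y hy Relation.ReflTransGen.refl with h | h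
              · exact h
              · exact absurd ⟨hbA, hbK, h⟩ hbHi
            exact lt_trans hby hya
      · refine ⟨{z | z ∈ A ∧ ¬ NFA.Reach t A y z ∧ z < y}, fun z hz => hz.1,
          ⟨x, hx, hnryx, ?_⟩, ?_, Or.inr ?_⟩
        · rcases hcomp x hx hnryx y hy Relation.ReflTransGen.refl with h | h
          · exact h
          · exact absurd ⟨x, hx, hnryx, h⟩ hHi
        · intro heq
          have : y ∈ {z | z ∈ A ∧ ¬ NFA.Reach t A y z ∧ z < y} := by rw [heq]; exact hy
          exact lt_irrefl y this.2.2
        · rintro b ⟨hbA, hnb, hby⟩ a ⟨haA, haB⟩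
          by_cases haK : NFA.Reach t A y a
          · exact (hunif b hbA hnb a haK).1 hby
          · exfalso
            rcases hcomp a haA haK y hy Relation.ReflTransGen.refl with h | h
            · exact haB ⟨haA, haK, h⟩
            · exact hHi ⟨a, haA, haK, h⟩
  · -- easy direction
    intro hdec a b c d hN
    obtain ⟨hab, hac, had, hbc, hbd, hcd, hlab, hlcb, hlcd, iac, iad, ibd⟩ := hN
    set A : Set X := {a, b, c, d} with hAdef
    have haA : a ∈ A := by simp [hAdef]
    have hbA : b ∈ A := by simp [hAdef]
    have hcA : c ∈ A := by simp [hAdef]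
    have hdA : d ∈ A := by simp [hAdef]
    obtain ⟨B, hBA, ⟨e, heB⟩, hne, hcase⟩ := hdec A ⟨a, haA, b, hbA, hab⟩
    have hall : a ∈ B ∧ b ∈ B ∧ c ∈ B ∧ d ∈ B := by
      rcases hcase with hcase | hcase
      · -- disjoint: comparable pairs on same side
        have same : ∀ u w : X, u ∈ A → w ∈ A → u < w → (u ∈ B ↔ w ∈ B) := by
          intro u w hu hw hlt
          constructor
          · intro huB
            by_contra hwB
            exact (hcase u huB w ⟨hw, hwB⟩).1 hlt.le
          · intro hwB
            by_contra huB
            exact (hcase w hwB u ⟨hu, huB⟩).2 hlt.le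
        have h1 := same a b haA hbA hlab
        have h2 := same c b hcA hbA hlcb
        have h3 := same c d hcA hdA hlcd
        have he' : e = a ∨ e = b ∨ e = c ∨ e = d := by
          have h := hBA heB; rw [hAdef] at h; simpa using h
        have key : a ∈ B := by
          rcases he' with rfl | rfl | rfl | rfl
          · exact heB
          · exact h1.mpr heB
          · exact h1.mpr (h2.mp heB)
          · exact h1.mpr (h2.mp (h3.mpr heB))
        exact ⟨key, h1.mp key, h2.mpr (h1.mp key), h3.mp (h2.mpr (h1.mp key))⟩
      · -- linear: incomparable pairs on same side
        have same : ∀ u w : X, u ∈ A → w ∈ A → ¬ u ≤ w → ¬ w ≤ u → (u ∈ B ↔ w ∈ B) := by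
          intro u w hu hw h1 h2
          constructor
          · intro huB
            by_contra hwB
            exact h1 (hcase u huB w ⟨hw, hwB⟩).le
          · intro hwB
            by_contra huB
            exact h2 (hcase w hwB u ⟨hu, huB⟩).le
        have h1 := same a c haA hcA iac.1 iac.2
        have h2 := same a d haA hdA iad.1 iad.2
        have h3 := same b d hbA hdA ibd.1 ibd.2
        have he' : e = a ∨ e = b ∨ e = c ∨ e = d := by
          have h := hBA heB; rw [hAdef] at h; simpa using h
        have key : a ∈ B := by
          rcases he' with rfl | rfl | rfl | rfl
          · exact heB
          · exact h2.mpr (h3.mp heB)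
          · exact h1.mpr heB
          · exact h2.mpr heB
        exact ⟨key, h3.mpr (h2.mp key), h1.mp key, h2.mp key⟩
    apply hne
    refine Set.eq_of_subset_of_subset hBA ?_
    intro z hz
    rw [hAdef] at hz
    simp only [Set.mem_insert_iff, Set.mem_singleton_iff] at hz
    rcases hz with rfl | rfl | rfl | rfl
    · exact hall.1
    · exact hall.2.1
    · exact hall.2.2.1
    · exact hall.2.2.2
end

section
/- Let P = (X, ≤) be an N-free poset and let x ∈ X be such that C_x is nonempty. Let C'_x be the set of elements comparable to x that are incomparable to some element of inc(x). Then every element of C⁻_x is strictly below every element of C'_x ∪ inc(x) ∪ C⁺_x, and every element of C'_x ∪ inc(x) is strictly below every element of C⁺_x; in particular, P is the linear sum of C⁻_x, C'_x ∪ inc(x) ∪ {x}, and C⁺_x. -/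
theorem nfree_linear_sum_decomposition
    {X : Type*} [PartialOrder X] (hN : NFree X)
    (x : X) (hne : (Cminus x ∪ Cplus x).Nonempty) :
    (∀ a ∈ Cminus x,
      ∀ b ∈ {y : X | (y < x ∨ x < y) ∧ ∃ z ∈ incP x, ¬ y ≤ z ∧ ¬ z ≤ y} ∪ incP x ∪ Cplus x,
        a < b) ∧
    (∀ a ∈ {y : X | (y < x ∨ x < y) ∧ ∃ z ∈ incP x, ¬ y ≤ z ∧ ¬ z ≤ y} ∪ incP x,
      ∀ b ∈ Cplus x, a < b) ∧
    (∀ a ∈ Cminus x,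
      ∀ b ∈ ({y : X | (y < x ∨ x < y) ∧ ∃ z ∈ incP x, ¬ y ≤ z ∧ ¬ z ≤ y} ∪ incP x ∪ {x} : Set X),
        a < b) ∧
    (∀ a ∈ ({y : X | (y < x ∨ x < y) ∧ ∃ z ∈ incP x, ¬ y ≤ z ∧ ¬ z ≤ y} ∪ incP x ∪ {x} : Set X),
      ∀ b ∈ Cplus x, a < b) ∧
    (Set.univ = Cminus x ∪
      ({y : X | (y < x ∨ x < y) ∧ ∃ z ∈ incP x, ¬ y ≤ z ∧ ¬ z ≤ y} ∪ incP x ∪ {x}) ∪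
      Cplus x) := by
  classical
  have hAinc : ∀ a ∈ Cminus x, ∀ z ∈ incP x, a < z := by
    intro a ha z hz
    rcases ha.2 z hz with h | h
    · exact lt_of_le_of_ne h (by rintro rfl; exact hz.2 ha.1.le)
    · exact absurd (h.trans ha.1.le) hz.2
  have hincB : ∀ z ∈ incP x, ∀ b ∈ Cplus x, z < b := by
    intro z hz b hb
    rcases hb.2 z hz with h | h
    · exact absurd (hb.1.le.trans h) hz.1
    · exact lt_of_le_of_ne h (by rintro rfl; exact hz.1 hb.1.le)
  have hAC' : ∀ a ∈ Cminus x,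
      ∀ y ∈ {y : X | (y < x ∨ x < y) ∧ ∃ z ∈ incP x, ¬ y ≤ z ∧ ¬ z ≤ y}, a < y := by
    intro a ha y hy
    obtain ⟨hyx, z, hz, hyz1, hyz2⟩ := hy
    rcases hyx with hyx | hxy
    · have haz := hAinc a ha z hz
      have hya : ¬ y ≤ a := fun h => hyz1 (h.trans haz.le)
      by_contra hay
      have hay' : ¬ a ≤ y := fun h =>
        hay (lt_of_le_of_ne h (by rintro rfl; exact hyz1 haz.le))
      exact hN y x a z ⟨ne_of_lt hyx, fun h => hya h.le, fun h => hyz1 h.le,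
        (ne_of_lt ha.1).symm, fun h => hz.1 h.le, ne_of_lt haz,
        hyx, ha.1, haz, ⟨hya, hay'⟩, ⟨hyz1, hyz2⟩, ⟨hz.1, hz.2⟩⟩
    · exact ha.1.trans hxy
  have hC'B : ∀ y ∈ {y : X | (y < x ∨ x < y) ∧ ∃ z ∈ incP x, ¬ y ≤ z ∧ ¬ z ≤ y},
      ∀ b ∈ Cplus x, y < b := by
    intro y hy b hb
    obtain ⟨hyx, z, hz, hyz1, hyz2⟩ := hy
    rcases hyx with hyx | hxy
    · exact hyx.trans hb.1
    · have hzb := hincB z hz b hb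
      have hby : ¬ b ≤ y := fun h => hyz2 (hzb.le.trans h)
      by_contra hyb
      have hyb' : ¬ y ≤ b := fun h =>
        hyb (lt_of_le_of_ne h (by rintro rfl; exact hyz2 hzb.le))
      exact hN z b x y ⟨ne_of_lt hzb, fun h => hz.2 h.le, fun h => hyz2 h.le,
        (ne_of_lt hb.1).symm, fun h => hby h.le, ne_of_lt hxy,
        hzb, hb.1, hxy, ⟨hz.2, hz.1⟩, ⟨hyz2, hyz1⟩, ⟨hby, hyb'⟩⟩
  refine ⟨?_, ?_, ?_, ?_, ?_⟩
  · rintro a ha b ((hb | hb) | hb)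
    · exact hAC' a ha b hb
    · exact hAinc a ha b hb
    · exact ha.1.trans hb.1
  · rintro a (ha | ha) b hb
    · exact hC'B a ha b hb
    · exact hincB a ha b hb
  · rintro a ha b ((hb | hb) | hb)
    · exact hAC' a ha b hb
    · exact hAinc a ha b hb
    · rcases hb with rfl; exact ha.1
  · rintro a ((ha | ha) | ha) b hb
    · exact hC'B a ha b hb
    · exact hincB a ha b hb
    · rcases ha with rfl; exact hb.1
  · ext y
    simp only [Set.mem_univ, Set.mem_union, Set.mem_singleton_iff, true_iff]
    by_cases hxy : x ≤ y
    · rcases eq_or_lt_of_le hxy with rfl | hlt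
      · exact Or.inl (Or.inr (Or.inr rfl))
      · by_cases hall : ∀ z ∈ incP x, (y ≤ z ∨ z ≤ y)
        · exact Or.inr ⟨hlt, hall⟩
        · push_neg at hall
          obtain ⟨z, hz, h1, h2⟩ := hall
          exact Or.inl (Or.inr (Or.inl (Or.inl ⟨Or.inr hlt, z, hz, h1, h2⟩)))
    · by_cases hyx : y ≤ x
      · have hlt : y < x := lt_of_le_of_ne hyx (by rintro rfl; exact hxy le_rfl)
        by_cases hall : ∀ z ∈ incP x, (y ≤ z ∨ z ≤ y)
        · exact Or.inl (Or.inl ⟨hlt, hall⟩)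
        · push_neg at hall
          obtain ⟨z, hz, h1, h2⟩ := hall
          exact Or.inl (Or.inr (Or.inl (Or.inl ⟨Or.inl hlt, z, hz, h1, h2⟩)))
      · exact Or.inl (Or.inr (Or.inl (Or.inr ⟨hxy, hyx⟩)))
end
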